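/- Let A be a DFA over the alphabet Bool with finite state set Q. If the accepted language L(A) is finite and every word of L(A) is a square, then 2·|L(A)| ≤ (|Q| + 1)·|Q|^2 (in particular |L(A)| ≤ |Q|^3). -/

import Mathlib

/-- The morphism β with β(0)=01, β(1)=10, extended to words. -/
def beta (x : List Bool) : List Bool := x.flatMap (fun b => [b, !b])

/-- The map ex : x ↦ β(x)·11·0^(|x|²+3)·β(x)·11·0^(|x|²+3). -/
def ex (x : List Bool) : List Bool :=
  beta x ++ [true, true] ++ List.replicate (x.length ^ 2 + 3) false ++
  beta x ++ [true, true] ++ List.replicate (x.length ^ 2 + 3) false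

/-- D is the image of ex. -/
def D : Set (List Bool) := Set.range ex

lemma length_lt_card {Q : Type} [Fintype Q] (A : DFA Bool Q)
    (hfin : (A.accepts : Set (List Bool)).Finite) :
    ∀ w ∈ A.accepts, w.length < Fintype.card Q := by
  intro w hw
  by_contra h
  push_neg at h
  obtain ⟨a, b, c, hx, hab, hb, hsub⟩ := A.pumping_lemma hw h
  apply hfin.not_infinite
  apply Set.infinite_of_injective_forall_mem
    (f := fun n : ℕ => a ++ (List.replicate n b).flatten ++ c)
  · intro m n hmn
    have hlen := congrArg List.length hmn
    simp [List.length_flatten, List.map_replicate, List.sum_replicate, smul_eq_mul] at hlen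
    rcases hlen with h | h
    · exact h
    · exact (hb h).elim
  · intro n
    apply hsub
    refine Language.append_mem_mul (Language.append_mem_mul rfl ?_) rfl
    exact Language.join_mem_kstar (by
      intro y hy
      rw [List.eq_of_mem_replicate hy]
      rfl)

lemma square_halves {u v x : List Bool} (huv : u ++ v = x ++ x)
    (hlen : u.length = v.length) : u = v := by
  have hx : x.length = u.length := by
    have := congrArg List.length huv
    simp at this
    omega
  have h1 : u = x := by
    have := congrArg (List.take u.length) huv
    rwa [List.take_left, ← hx, List.take_left] at this
  have h2 : v = x := by
    have := congrArg (List.drop u.length) huv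
    rwa [List.drop_left, ← hx, List.drop_left] at this
  rw [h1, h2]

/-- A finite regular language of squares has cardinality at most |Q|³/2. -/
theorem stmt_10 (Q : Type) [Fintype Q] (A : DFA Bool Q)
    (hfin : (A.accepts : Set (List Bool)).Finite)
    (hsq : ∀ w ∈ A.accepts, ∃ u : List Bool, w = u ++ u) :
    2 * (A.accepts : Set (List Bool)).ncard ≤
      (Fintype.card Q + 1) * Fintype.card Q ^ 2 := by
  set n := Fintype.card Q with hn
  have hpos : 0 < n := Fintype.card_pos_iff.mpr ⟨A.start⟩
  set k := (n - 1) / 2 + 1 with hk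
  have hlen := length_lt_card A hfin
  -- the key injection
  have hbound : ∀ w (hw : w ∈ A.accepts), w.length / 2 < k := by
    intro w hw
    have := hlen w hw
    omega
  let f : {w : List Bool // w ∈ A.accepts} → Q × Q × Fin k := fun w =>
    (A.eval (w.1.take (w.1.length / 2)), A.eval w.1, ⟨w.1.length / 2, hbound w.1 w.2⟩)
  have htake : ∀ {w : List Bool} {u : List Bool}, w = u ++ u →
      w.take (w.length / 2) = u := by
    intro w u h
    subst h
    have : (u ++ u).length / 2 = u.length := by simp; omega
    rw [this, List.take_left]
  have hinj : Function.Injective f := by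
    rintro ⟨w, hw⟩ ⟨w', hw'⟩ hf
    obtain ⟨u, hu⟩ := hsq w hw
    obtain ⟨v, hv⟩ := hsq w' hw'
    simp only [f, Prod.mk.injEq, Fin.mk.injEq] at hf
    obtain ⟨h1, h2, h3⟩ := hf
    rw [htake hu, htake hv] at h1
    have hul : u.length = v.length := by
      have e1 : w.length / 2 = u.length := by subst hu; simp; omega
      have e2 : w'.length / 2 = v.length := by subst hv; simp; omega
      omega
    -- u ++ v is accepted
    have haccuv : u ++ v ∈ A.accepts := by
      rw [DFA.mem_accepts] at hw' ⊢
      have : A.eval (u ++ v) = A.eval w' := by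
        rw [hv]
        show A.evalFrom A.start (u ++ v) = A.evalFrom A.start (v ++ v)
        rw [DFA.evalFrom_of_append, DFA.evalFrom_of_append]
        exact congrArg (fun q => A.evalFrom q v) h1
      rw [this]; exact hw'
    obtain ⟨x, hx⟩ := hsq _ haccuv
    have huveq : u = v := square_halves hx hul
    subst huveq
    exact Subtype.ext (hu.trans hv.symm)
  have hcard : (A.accepts : Set (List Bool)).ncard ≤ n * (n * k) := by
    have := Nat.card_le_card_of_injective f hinj
    rw [Nat.card_prod, Nat.card_prod, Nat.card_eq_fintype_card (α := Q),
      Nat.card_eq_fintype_card (α := Fin k), Fintype.card_fin] at this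
    refine (Nat.card_coe_set_eq (A.accepts : Set (List Bool))).symm.trans_le ?_
    exact this
  have h2k : 2 * k ≤ n + 1 := by omega
  calc 2 * (A.accepts : Set (List Bool)).ncard ≤ 2 * (n * (n * k)) :=
        Nat.mul_le_mul_left _ hcard
    _ = (2 * k) * n ^ 2 := by ring
    _ ≤ (n + 1) * n ^ 2 := Nat.mul_le_mul_right _ h2k
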